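/- (Tangent space to the manifold of idempotents.) (a) If P : ℝ → B(H) is a curve with P(t)² = P(t) for all t, differentiable at t = 0 in operator norm with derivative B, then P(0) B P(0) = 0 and (1 − P(0)) B (1 − P(0)) = 0. (b) Conversely, if P ∈ B(H) satisfies P² = P and B ∈ B(H) satisfies P B P = 0 and (1 − P) B (1 − P) = 0, then the curve P_t := exp(t(BP − PB)) ∘ P ∘ exp(−t(BP − PB)) satisfies P_t² = P_t for all t ∈ ℝ, P_0 = P, and is differentiable at t = 0 with derivative B. -/

import Mathlib

open NormedSpace in
lemma exp_neg_mul_exp_self' {A : Type*} [NormedRing A] [NormedAlgebra ℂ A]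
    [CompleteSpace A] (x : A) : exp (-x) * exp x = 1 := by
  letI : NormedAlgebra ℚ A := NormedAlgebra.restrictScalars ℚ ℂ A
  rw [← NormedSpace.exp_add_of_commute ((Commute.refl x).neg_left), neg_add_cancel,
    NormedSpace.exp_zero]

/-- Tangent space to the manifold of idempotents in `B(H)`.
(a) If `P : ℝ → B(H)` is a curve of idempotents, differentiable at `t = 0` in operator norm
with derivative `B`, then `P(0) B P(0) = 0` and `(1 − P(0)) B (1 − P(0)) = 0`.
(b) Conversely, if `P² = P`, `P B P = 0` and `(1 − P) B (1 − P) = 0`, then the curve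
`P_t := exp(t(BP − PB)) P exp(−t(BP − PB))` consists of idempotents, starts at `P`, and is
differentiable at `t = 0` with derivative `B`. -/
theorem stmt13 {H : Type*} [NormedAddCommGroup H] [InnerProductSpace ℂ H] [CompleteSpace H] :
    (∀ (P : ℝ → (H →L[ℂ] H)) (B : H →L[ℂ] H),
      (∀ t : ℝ, P t * P t = P t) → HasDerivAt P B 0 →
        P 0 * B * P 0 = 0 ∧ (1 - P 0) * B * (1 - P 0) = 0) ∧
    (∀ P B : H →L[ℂ] H, P * P = P → P * B * P = 0 → (1 - P) * B * (1 - P) = 0 →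
      (∀ t : ℝ, (NormedSpace.exp (t • (B * P - P * B)) * P *
            NormedSpace.exp (-(t • (B * P - P * B)))) *
          (NormedSpace.exp (t • (B * P - P * B)) * P *
            NormedSpace.exp (-(t • (B * P - P * B))))
        = NormedSpace.exp (t • (B * P - P * B)) * P *
            NormedSpace.exp (-(t • (B * P - P * B)))) ∧
      (NormedSpace.exp ((0 : ℝ) • (B * P - P * B)) * P *
          NormedSpace.exp (-((0 : ℝ) • (B * P - P * B))) = P) ∧
      HasDerivAt (fun t : ℝ => NormedSpace.exp (t • (B * P - P * B)) * P *
          NormedSpace.exp (-(t • (B * P - P * B)))) B 0) := by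
  constructor
  · intro P B hP hD
    set Q := P 0 with hQ
    have hPP : Q * Q = Q := hP 0
    have h2 : HasDerivAt (fun t => P t * P t) (B * Q + Q * B) 0 := hD.mul hD
    have h3 : (fun t => P t * P t) = P := funext hP
    rw [h3] at h2
    have key : B * Q + Q * B = B := h2.unique hD
    have h0 : Q * B * Q = 0 := by
      have hmid := congrArg (fun X => Q * X * Q) key
      have e1 : Q * (B * Q + Q * B) * Q = Q * B * (Q * Q) + (Q * Q) * (B * Q) := by
        noncomm_ring
      rw [e1, hPP, mul_assoc] at hmid
      rw [mul_assoc]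
      exact add_eq_right.mp hmid
    refine ⟨h0, ?_⟩
    have expand : (1 - Q) * B * (1 - Q) = B - (B * Q + Q * B) + Q * B * Q := by
      noncomm_ring
    rw [expand, key, h0, sub_self, zero_add]
  · intro P B hPP hPBP hcomp
    set A := B * P - P * B with hA
    have hinv : ∀ t : ℝ, NormedSpace.exp (-(t • A)) * NormedSpace.exp (t • A) = 1 :=
      fun t => exp_neg_mul_exp_self' _
    refine ⟨fun t => ?_, ?_, ?_⟩
    · calc (NormedSpace.exp (t • A) * P * NormedSpace.exp (-(t • A))) *
          (NormedSpace.exp (t • A) * P * NormedSpace.exp (-(t • A)))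
          = NormedSpace.exp (t • A) * P *
            (NormedSpace.exp (-(t • A)) * NormedSpace.exp (t • A)) *
            (P * NormedSpace.exp (-(t • A))) := by noncomm_ring
        _ = NormedSpace.exp (t • A) * (P * P) * NormedSpace.exp (-(t • A)) := by
            rw [hinv t]; noncomm_ring
        _ = NormedSpace.exp (t • A) * P * NormedSpace.exp (-(t • A)) := by rw [hPP]
    · simp [NormedSpace.exp_zero]
    · have hB : B = A * P - P * A := by
        have hBPB : B = B * P + P * B := by
          have e : (1 - P) * B * (1 - P) = B - (B * P + P * B) + P * B * P := by noncomm_ring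
          rw [e, hPBP, add_zero, sub_eq_zero] at hcomp
          exact hcomp
        have e2 : A * P - P * A = B * P + P * B := by
          rw [hA]
          have e : (B * P - P * B) * P - P * (B * P - P * B)
              = B * (P * P) + (P * P) * B - P * B * P - P * B * P := by noncomm_ring
          rw [e, hPP, hPBP]
          abel
        rw [e2, ← hBPB]
      have hg : HasDerivAt (fun t : ℝ => NormedSpace.exp (t • A)) A 0 := by
        set_option synthInstance.maxHeartbeats 1000000 in
        have := hasDerivAt_exp_smul_const (𝕂 := ℝ) A 0
        rw [zero_smul, NormedSpace.exp_zero, one_mul] at this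
        exact this
      have hh : HasDerivAt (fun t : ℝ => NormedSpace.exp (-(t • A))) (-A) 0 := by
        set_option synthInstance.maxHeartbeats 1000000 in
        have := hasDerivAt_exp_smul_const (𝕂 := ℝ) (-A) 0
        rw [zero_smul, NormedSpace.exp_zero, one_mul] at this
        simp only [smul_neg] at this
        exact this
      have hgP : HasDerivAt (fun t : ℝ => NormedSpace.exp (t • A) * P) (A * P) 0 :=
        hg.mul_const P
      have hprod := hgP.mul hh
      refine hprod.congr_deriv ?_
      simp only [zero_smul, NormedSpace.exp_zero, neg_zero, mul_one, one_mul]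
      rw [hB]
      noncomm_ring
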